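/- Let Γ₁ ≤ Γ and Λ ≤ Γ be subgroups such that the action of Γ₁ × Λ on Γ given by (g, k)·h = g h k⁻¹ is free (equivalently, g h k = h implies g = k = e). Then there exists a map π : Γ → Λ satisfying π(g h k) = π(h) k for all g ∈ Γ₁, h ∈ Γ, k ∈ Λ, and the associated cocycle ω(g, hΛ) = π(gh)π(h)⁻¹ satisfies ω(g, hΛ) = e for all g ∈ Γ₁ and h ∈ Γ. -/
import Mathlib


/-- If the left–right action of `Γ₁ × Λ` on `Γ` given by `(g,k)·h = ghk⁻¹` is free,
then there is a map `π : Γ → Λ` with `π(ghk) = π(h)k` for all `g ∈ Γ₁`, `h ∈ Γ`,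
`k ∈ Λ`, and the associated cocycle `ω(g, hΛ) = π(gh)π(h)⁻¹` is trivial on `Γ₁`. -/
theorem coinduction_trivial_cocycle_on_free_part {Γ : Type*} [Group Γ]
    (Γ₁ Λ : Subgroup Γ)
    (hfree : ∀ g ∈ Γ₁, ∀ k ∈ Λ, ∀ h : Γ, g * h * k⁻¹ = h → g = 1 ∧ k = 1) :
    ∃ π : Γ → Γ, (∀ h : Γ, π h ∈ Λ) ∧
      (∀ g ∈ Γ₁, ∀ h : Γ, ∀ k ∈ Λ, π (g * h * k) = π h * k) ∧
      (∀ g ∈ Γ₁, ∀ h : Γ, π (g * h) * (π h)⁻¹ = 1) := by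
  classical
  have equiv : Equivalence (fun h h' : Γ => ∃ g ∈ Γ₁, ∃ k ∈ Λ, h' = g * h * k) := by
    constructor
    · intro h; exact ⟨1, one_mem _, 1, one_mem _, by group⟩
    · rintro a b ⟨g, hg, k, hk, rfl⟩
      exact ⟨g⁻¹, inv_mem hg, k⁻¹, inv_mem hk, by group⟩
    · rintro a b c ⟨g, hg, k, hk, rfl⟩ ⟨g', hg', k', hk', rfl⟩
      exact ⟨g' * g, mul_mem hg' hg, k * k', mul_mem hk hk', by group⟩
  let s : Setoid Γ := ⟨_, equiv⟩
  let rep : Γ → Γ := fun h => Quotient.out (Quotient.mk s h)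
  have hrep : ∀ h : Γ, ∃ g ∈ Γ₁, ∃ k ∈ Λ, h = g * rep h * k := fun h =>
    Quotient.mk_out (s := s) h
  have hrep_eq : ∀ g ∈ Γ₁, ∀ h : Γ, ∀ k ∈ Λ, rep (g * h * k) = rep h := by
    intro g hg h k hk
    have : (Quotient.mk s (g * h * k)) = Quotient.mk s h :=
      Quotient.sound (equiv.symm ⟨g, hg, k, hk, rfl⟩)
    simp only [rep, this]
  have key : ∀ r : Γ, ∀ k ∈ Λ, ∀ k' ∈ Λ, ∀ g ∈ Γ₁, ∀ g' ∈ Γ₁,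
      g * r * k = g' * r * k' → k = k' := by
    intro r k hk k' hk' g hg g' hg' heq
    have h1 : (g'⁻¹ * g) * r * (k' * k⁻¹)⁻¹ = r := by
      have : g * r * k * k'⁻¹ = g' * r := by rw [heq]; group
      calc (g'⁻¹ * g) * r * (k' * k⁻¹)⁻¹ = g'⁻¹ * (g * r * k * k'⁻¹) := by group
        _ = g'⁻¹ * (g' * r) := by rw [this]
        _ = r := by group
    have := (hfree _ (mul_mem (inv_mem hg') hg) _ (mul_mem hk' (inv_mem hk)) r h1).2
    have : k' * k⁻¹ = 1 := this
    calc k = (k' * k⁻¹) * k := by rw [this]; group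
      _ = k' := by group
  have hP : ∀ h : Γ, ∃ k : Γ, k ∈ Λ ∧ ∃ g ∈ Γ₁, h = g * rep h * k := by
    intro h
    obtain ⟨g, hg, k, hk, hrel⟩ := hrep h
    exact ⟨k, hk, g, hg, hrel⟩
  let π : Γ → Γ := fun h => (hP h).choose
  have πmem : ∀ h, π h ∈ Λ := fun h => (hP h).choose_spec.1
  have πspec : ∀ h : Γ, ∃ g ∈ Γ₁, h = g * rep h * π h := fun h => (hP h).choose_spec.2
  have main : ∀ g ∈ Γ₁, ∀ h : Γ, ∀ k ∈ Λ, π (g * h * k) = π h * k := by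
    intro g hg h k hk
    obtain ⟨G, hG, hGe⟩ := πspec (g * h * k)
    obtain ⟨g₀, hg₀, hge⟩ := πspec h
    refine key (rep h) _ (πmem _) _ (mul_mem (πmem h) hk) G hG (g * g₀) (mul_mem hg hg₀) ?_
    have h1 : G * rep (g * h * k) * π (g * h * k) = g * h * k := hGe.symm
    rw [hrep_eq g hg h k hk] at h1
    rw [h1]
    conv_lhs => rw [hge]
    group
  refine ⟨π, πmem, main, ?_⟩
  intro g hg h
  have := main g hg h 1 (one_mem _)
  rw [mul_one, mul_one] at this
  rw [this]; group
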